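/- arXiv:2306.05852 — 2 statements merged into one kernel-verified Lean document; each statement's English description precedes it below -/
import Mathlib

section
/- Let p ≥ 3 be prime and G a p-group. Suppose χ is a nonlinear irreducible character of G, and for i = 1,2 there are subgroups H_i ≤ G and linear characters λ_i of H_i with χ = Ind_{H_i}^G(λ_i) and ℚ(χ) = ℚ(λ_i). Then ker(λ_1) is normal in G if and only if ker(λ_2) is normal in G. -/
open scoped Classical
noncomputable section

/-- The kernel of a character, as a set. -/
def charKer {G : Type*} [Group G] (χ : G → ℂ) : Set G := {g | χ g = χ 1}

/-- The center `Z(χ)` of a character, as a set. -/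
def charZ {G : Type*} [Group G] (χ : G → ℂ) : Set G :=
  {g | ‖χ g‖ = ‖χ 1‖}

/-- `χ` is the character of an irreducible complex representation of `G`. -/
def IsIrrChar (G : Type) [Group G] (χ : G → ℂ) : Prop :=
  ∃ V : FDRep ℂ G, CategoryTheory.Simple V ∧ χ = V.character

/-- The field `ℚ(χ)` generated over `ℚ` by the values of `χ`. -/
def QChar {G : Type*} (χ : G → ℂ) : IntermediateField ℚ ℂ :=
  IntermediateField.adjoin ℚ (Set.range χ)

/-- The order of the Galois group `Γ(χ)` of `ℚ(χ)/ℚ`. -/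
def galCard {G : Type*} (χ : G → ℂ) : ℕ :=
  Nat.card (QChar χ ≃ₐ[ℚ] QChar χ)

/-- The codegree `cod(χ) = |G/ker χ| / χ(1)`, as a rational number,
where `d = χ(1)` is the degree of `χ`. -/
def codeg {G : Type*} [Group G] [Fintype G] (χ : G → ℂ) (d : ℕ) : ℚ :=
  (Fintype.card G : ℚ) / ((Nat.card (charKer χ)) * d)

/-- The character of `G` induced from the linear character `lam` of `H`. -/
def indChar {G : Type*} [Group G] [Fintype G] (H : Subgroup G) (lam : H →* ℂˣ) : G → ℂ :=
  fun g => (Nat.card H : ℂ)⁻¹ *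
    ∑ x : G, if h : x * g * x⁻¹ ∈ H then ((lam ⟨x * g * x⁻¹, h⟩ : ℂˣ) : ℂ) else 0

/-- The values field `ℚ(λ)` of a linear character. -/
def QLin {H : Type*} [Group H] (lam : H →* ℂˣ) : IntermediateField ℚ ℂ :=
  IntermediateField.adjoin ℚ (Set.range fun h => ((lam h : ℂˣ) : ℂ))

/-! ### Auxiliary lemmas -/

lemma forall_eq_one_of_sum_eq_card {α : Type*} [Fintype α] {f : α → ℂ}
    (hb : ∀ x, ‖f x‖ ≤ 1) (h : ∑ x, f x = (Fintype.card α : ℂ)) :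
    ∀ x, f x = 1 := by
  have hre : ∑ x, (f x).re = (Fintype.card α : ℝ) := by
    have := congrArg Complex.re h
    simpa [Complex.re_sum] using this
  have hle : ∀ x : α, (f x).re ≤ 1 := fun x => (Complex.re_le_norm _).trans (hb x)
  have h1 : ∀ x, (f x).re = 1 := by
    intro x
    by_contra hx
    have hlt : (f x).re < 1 := lt_of_le_of_ne (hle x) hx
    have : ∑ y, (f y).re < ∑ _y : α, (1 : ℝ) :=
      Finset.sum_lt_sum (fun y _ => hle y) ⟨x, Finset.mem_univ x, hlt⟩
    rw [hre] at this
    simp at this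
  intro x
  have habs : ‖f x‖ ^ 2 ≤ 1 := by
    have := hb x
    nlinarith [norm_nonneg (f x)]
  have him : (f x).im = 0 := by
    have hsq := Complex.sq_norm (f x)
    rw [Complex.normSq_apply, h1 x] at hsq
    nlinarith [sq_nonneg (f x).im]
  exact Complex.ext (by simpa using h1 x) (by simpa using him)

lemma indChar_apply_one {G : Type*} [Group G] [Fintype G] (H : Subgroup G) (lam : H →* ℂˣ) :
    indChar H lam 1 = (Fintype.card G : ℂ) / (Nat.card H : ℂ) := by
  have hx : ∀ x : G, x * 1 * x⁻¹ = (1 : G) := by intro x; group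
  have hterm : ∀ x : G,
      (if h : x * 1 * x⁻¹ ∈ H then ((lam ⟨x * 1 * x⁻¹, h⟩ : ℂˣ) : ℂ) else 0) = 1 := by
    intro x
    rw [dif_pos (by rw [hx x]; exact H.one_mem)]
    have h1 : (⟨x * 1 * x⁻¹, by rw [hx x]; exact H.one_mem⟩ : H) = 1 := by
      ext; simpa using hx x
    rw [h1, map_one, Units.val_one]
  unfold indChar
  rw [Finset.sum_congr rfl fun x _ => hterm x, Finset.sum_const, Finset.card_univ]
  simp [div_eq_inv_mul]

lemma mem_map_ker_iff {G : Type*} [Group G] (H : Subgroup G) (lam : H →* ℂˣ) (y : G) :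
    y ∈ Subgroup.map H.subtype lam.ker ↔ ∃ h : y ∈ H, lam ⟨y, h⟩ = 1 := by
  constructor
  · rintro ⟨k, hk, rfl⟩
    refine ⟨k.2, ?_⟩
    have hk' : lam k = 1 := hk
    simpa [Subgroup.coe_subtype, Subtype.coe_eta] using hk'
  · rintro ⟨h, h1⟩
    exact ⟨⟨y, h⟩, MonoidHom.mem_ker.2 h1, rfl⟩

lemma abs_lam_val {G : Type*} [Group G] [Fintype G] {H : Subgroup G} (lam : H →* ℂˣ) (h : H) :
    ‖((lam h : ℂˣ) : ℂ)‖ = 1 := by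
  have hpow : ((lam h : ℂˣ) : ℂ) ^ (Nat.card H) = 1 := by
    rw [← Units.val_pow_eq_pow_val, ← map_pow, pow_card_eq_one', map_one, Units.val_one]
  have hcard : (Nat.card H) ≠ 0 := Nat.card_pos.ne'
  have := Complex.norm_eq_one_of_pow_eq_one hpow hcard
  simpa using this

lemma indChar_ker_iff {G : Type*} [Group G] [Fintype G] (H : Subgroup G) (lam : H →* ℂˣ)
    (g : G) :
    indChar H lam g = indChar H lam 1 ↔
      ∀ x : G, x * g * x⁻¹ ∈ Subgroup.map H.subtype lam.ker := by
  have hH0 : ((Nat.card H : ℂ)) ≠ 0 := by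
    exact_mod_cast Nat.cast_ne_zero.2 (Nat.card_pos (α := H)).ne'
  set f : G → ℂ := fun x =>
    if h : x * g * x⁻¹ ∈ H then ((lam ⟨x * g * x⁻¹, h⟩ : ℂˣ) : ℂ) else 0 with hf
  have hsum : indChar H lam g = (Nat.card H : ℂ)⁻¹ * ∑ x : G, f x := rfl
  constructor
  · intro heq x
    have hst : ∑ x : G, f x = (Fintype.card G : ℂ) := by
      have := heq
      rw [hsum, indChar_apply_one, div_eq_inv_mul] at this
      exact mul_left_cancel₀ (inv_ne_zero hH0) this
    have hb : ∀ x : G, ‖f x‖ ≤ 1 := by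
      intro x
      by_cases hx : x * g * x⁻¹ ∈ H
      · simp [hf, dif_pos hx, abs_lam_val]
      · simp only [hf, dif_neg hx]; simp
    have h1 := forall_eq_one_of_sum_eq_card hb hst x
    by_cases hx : x * g * x⁻¹ ∈ H
    · simp only [hf, dif_pos hx] at h1
      exact (mem_map_ker_iff H lam _).2 ⟨hx, Units.ext (by simpa using h1)⟩
    · simp only [hf, dif_neg hx] at h1
      exact absurd h1 (by norm_num)
  · intro hmem
    have hterm : ∀ x : G, f x = 1 := by
      intro x
      obtain ⟨hx, h1⟩ := (mem_map_ker_iff H lam _).1 (hmem x)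
      simp only [hf, dif_pos hx, h1, Units.val_one]
    rw [hsum, Finset.sum_congr rfl fun x _ => hterm x, Finset.sum_const, Finset.card_univ,
      indChar_apply_one, div_eq_inv_mul]
    simp

lemma finrank_QLin {H : Type*} [Group H] [Finite H] (lam : H →* ℂˣ) :
    Module.finrank ℚ (QLin lam) = (Nat.card lam.range).totient := by
  haveI : Finite lam.range := by
    have : (lam.range : Set ℂˣ) = Set.range lam := lam.coe_range
    exact Set.Finite.to_subtype (this ▸ Set.finite_range lam)
  haveI : IsCyclic lam.range := inferInstance
  obtain ⟨g, hg⟩ := IsCyclic.exists_generator (α := lam.range)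
  set n := Nat.card lam.range with hn
  have hnpos : 0 < n := Nat.card_pos
  have horder : orderOf g = n := orderOf_eq_card_of_forall_mem_zpowers hg
  set ζ : ℂ := ((g : ℂˣ) : ℂ) with hζdef
  have hζord : orderOf ζ = n := by
    rw [hζdef, orderOf_units, Subgroup.orderOf_coe, horder]
  have hζ : IsPrimitiveRoot ζ n := hζord ▸ IsPrimitiveRoot.orderOf ζ
  have hQ : QLin lam = IntermediateField.adjoin ℚ {ζ} := by
    apply le_antisymm
    · rw [QLin, IntermediateField.adjoin_le_iff]
      rintro z ⟨h, rfl⟩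
      obtain ⟨k, hk⟩ := hg ⟨lam h, ⟨h, rfl⟩⟩
      have hval : ((lam h : ℂˣ) : ℂ) = ζ ^ k := by
        have := congrArg (fun (u : lam.range) => ((u : ℂˣ) : ℂ)) hk
        simpa [hζdef] using this.symm
      simp only [hval]
      exact zpow_mem (IntermediateField.mem_adjoin_simple_self ℚ ζ) k
    · rw [IntermediateField.adjoin_le_iff]
      rintro z hz
      rw [Set.mem_singleton_iff] at hz
      subst hz
      obtain ⟨h, hh⟩ := g.2
      exact IntermediateField.subset_adjoin ℚ _ ⟨h, by simp only; rw [hζdef, hh]⟩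
  have hint : IsIntegral ℚ ζ := by
    have : IsIntegral ℤ ζ := hζ.isIntegral hnpos
    exact this.tower_top
  have hts := IntermediateField.adjoin_simple_toSubalgebra_of_isAlgebraic hint.isAlgebraic
  set np : ℕ+ := ⟨n, hnpos⟩ with hnp
  have hζp : IsPrimitiveRoot ζ (np : ℕ) := hζ
  haveI := hζp.adjoin_isCyclotomicExtension ℚ
  have hfin := IsCyclotomicExtension.finrank (n := np) (Algebra.adjoin ℚ ({ζ} : Set ℂ))
    (Polynomial.cyclotomic.irreducible_rat hnpos)
  rw [hQ, ← IntermediateField.finrank_eq_finrank_subalgebra, hts, hfin]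
  rfl

lemma card_map_ker_mul_card_range {G : Type*} [Group G] [Fintype G] (H : Subgroup G)
    (lam : H →* ℂˣ) :
    Nat.card (Subgroup.map H.subtype lam.ker) * Nat.card lam.range = Nat.card H := by
  have e1 : Nat.card (Subgroup.map H.subtype lam.ker) = Nat.card lam.ker :=
    (Nat.card_congr (lam.ker.equivMapOfInjective H.subtype H.subtype_injective).toEquiv).symm
  have e2 : Nat.card (H ⧸ lam.ker) = Nat.card lam.range :=
    Nat.card_congr (QuotientGroup.quotientKerEquivRange lam).toEquiv
  rw [e1, mul_comm, ← e2, ← Subgroup.card_eq_card_quotient_mul_card_subgroup]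

lemma totient_prime_pow_inj {p a b : ℕ} (hp : p.Prime) (h3 : 3 ≤ p)
    (h : (p ^ a).totient = (p ^ b).totient) : a = b := by
  have key : ∀ c : ℕ, 0 < c → (p ^ c).totient = p ^ (c - 1) * (p - 1) :=
    fun c hc => Nat.totient_prime_pow hp hc
  rcases Nat.eq_zero_or_pos a with ha | ha <;> rcases Nat.eq_zero_or_pos b with hb | hb
  · omega
  · exfalso
    rw [ha, pow_zero, Nat.totient_one, key b hb] at h
    have : 2 ≤ p - 1 := by omega
    have hpb : 1 ≤ p ^ (b - 1) := Nat.one_le_pow _ _ hp.pos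
    nlinarith
  · exfalso
    rw [hb, pow_zero, Nat.totient_one, key a ha] at h
    have : 2 ≤ p - 1 := by omega
    have hpa : 1 ≤ p ^ (a - 1) := Nat.one_le_pow _ _ hp.pos
    nlinarith
  · rw [key a ha, key b hb] at h
    have hcancel : p ^ (a - 1) = p ^ (b - 1) :=
      Nat.eq_of_mul_eq_mul_right (by omega) h
    have := Nat.pow_right_injective hp.two_le hcancel
    omega

/-- The main one-directional lemma; the theorem follows by symmetry. -/
lemma stmt4_aux {p : ℕ} [Fact p.Prime] (hp : 3 ≤ p) {G : Type} [Group G] [Fintype G]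
    (hG : IsPGroup p G) (χ : G → ℂ)
    (H₁ H₂ : Subgroup G) (lam₁ : H₁ →* ℂˣ) (lam₂ : H₂ →* ℂˣ)
    (h₁ : χ = indChar H₁ lam₁) (h₂ : χ = indChar H₂ lam₂)
    (hQ₁ : QChar χ = QLin lam₁) (hQ₂ : QChar χ = QLin lam₂)
    (hN : (Subgroup.map H₁.subtype lam₁.ker).Normal) :
    (Subgroup.map H₂.subtype lam₂.ker).Normal := by
  set N₁ := Subgroup.map H₁.subtype lam₁.ker with hN₁def
  set N₂ := Subgroup.map H₂.subtype lam₂.ker with hN₂def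
  have hG0 : (Fintype.card G : ℂ) ≠ 0 := Nat.cast_ne_zero.2 Fintype.card_ne_zero
  have h10 : (Nat.card H₁ : ℂ) ≠ 0 := Nat.cast_ne_zero.2 Nat.card_pos.ne'
  have h20 : (Nat.card H₂ : ℂ) ≠ 0 := Nat.cast_ne_zero.2 Nat.card_pos.ne'
  -- |H₁| = |H₂|
  have hH : Nat.card H₁ = Nat.card H₂ := by
    have e1 : indChar H₁ lam₁ 1 = indChar H₂ lam₂ 1 := by rw [← h₁, ← h₂]
    rw [indChar_apply_one, indChar_apply_one] at e1
    field_simp at e1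
    simpa [Nat.card_eq_fintype_card] using e1.symm
  -- |range λ₁| = |range λ₂|
  have hn : Nat.card lam₁.range = Nat.card lam₂.range := by
    have hfr : Module.finrank ℚ (QLin lam₁) = Module.finrank ℚ (QLin lam₂) := by
      rw [← hQ₁, hQ₂]
    rw [finrank_QLin, finrank_QLin] at hfr
    obtain ⟨k₁, hk₁⟩ := (hG.to_subgroup H₁).exists_card_eq
    obtain ⟨k₂, hk₂⟩ := (hG.to_subgroup H₂).exists_card_eq
    have hdvd₁ : Nat.card lam₁.range ∣ p ^ k₁ := by
      rw [← hk₁]; exact Dvd.intro_left _ (card_map_ker_mul_card_range H₁ lam₁)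
    have hdvd₂ : Nat.card lam₂.range ∣ p ^ k₂ := by
      rw [← hk₂]; exact Dvd.intro_left _ (card_map_ker_mul_card_range H₂ lam₂)
    obtain ⟨a₁, _, ha₁⟩ := (Nat.dvd_prime_pow (Fact.out : p.Prime)).1 hdvd₁
    obtain ⟨a₂, _, ha₂⟩ := (Nat.dvd_prime_pow (Fact.out : p.Prime)).1 hdvd₂
    rw [ha₁, ha₂] at hfr ⊢
    exact congrArg (p ^ ·) (totient_prime_pow_inj (Fact.out : p.Prime) hp hfr)
  -- |N₁| = |N₂|
  have hcard : Nat.card N₁ = Nat.card N₂ := by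
    have c₁ := card_map_ker_mul_card_range H₁ lam₁
    have c₂ := card_map_ker_mul_card_range H₂ lam₂
    rw [hn] at c₁
    rw [hH] at c₁
    rw [← c₂] at c₁
    exact Nat.eq_of_mul_eq_mul_right (Nat.card_pos) c₁
  -- N₁ ≤ N₂
  have hle : ∀ g : G, g ∈ N₁ → g ∈ N₂ := by
    intro g hg
    have hall : ∀ x : G, x * g * x⁻¹ ∈ N₁ := fun x => hN.conj_mem g hg x
    have hchi : χ g = χ 1 := by
      rw [h₁]; exact (indChar_ker_iff H₁ lam₁ g).2 hall
    have h2g : ∀ x : G, x * g * x⁻¹ ∈ N₂ :=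
      (indChar_ker_iff H₂ lam₂ g).1 (by rw [← h₂]; exact hchi)
    simpa using h2g 1
  -- conclude
  have hEq : N₁ = N₂ := by
    apply SetLike.ext'
    refine Set.eq_of_subset_of_ncard_le (fun g hg => hle g hg) ?_ (Set.toFinite _)
    rw [← Nat.card_coe_set_eq, ← Nat.card_coe_set_eq]
    exact le_of_eq hcard.symm
  exact hEq ▸ hN

/-- If a nonlinear irreducible character `χ` of a `p`-group (`p ≥ 3`) is induced from linear
characters `λᵢ` of subgroups `Hᵢ` with `ℚ(χ) = ℚ(λᵢ)` for `i = 1, 2`, then `ker λ₁` is normal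
in `G` iff `ker λ₂` is normal in `G`. -/
theorem stmt4 {p : ℕ} [Fact p.Prime] (hp : 3 ≤ p) {G : Type} [Group G] [Fintype G]
    (hG : IsPGroup p G) (χ : G → ℂ) (d : ℕ)
    (hχ : IsIrrChar G χ) (hd : χ 1 = (d : ℂ)) (hnl : d ≠ 1)
    (H₁ H₂ : Subgroup G) (lam₁ : H₁ →* ℂˣ) (lam₂ : H₂ →* ℂˣ)
    (h₁ : χ = indChar H₁ lam₁) (h₂ : χ = indChar H₂ lam₂)
    (hQ₁ : QChar χ = QLin lam₁) (hQ₂ : QChar χ = QLin lam₂) :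
    (Subgroup.map H₁.subtype lam₁.ker).Normal ↔
      (Subgroup.map H₂.subtype lam₂.ker).Normal := by
  constructor
  · exact stmt4_aux hp hG χ H₁ H₂ lam₁ lam₂ h₁ h₂ hQ₁ hQ₂
  · exact stmt4_aux hp hG χ H₂ H₁ lam₂ lam₁ h₂ h₁ hQ₂ hQ₁
end
end

section
/- Let G be a GVZ p-group (p ≥ 3), χ ∈ Irr(G), and suppose χ = Ind_H^G(λ) for a subgroup H ≤ G and linear λ on H with ℚ(χ) = ℚ(λ). Then |ker(λ)| = χ(1)·|ker(χ)|. -/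
open scoped Classical
noncomputable section

lemma sum_abs_eq_card {ι : Type*} [Fintype ι] (f : ι → ℂ)
    (h1 : ∀ x, ‖f x‖ ≤ 1)
    (h : ‖∑ x, f x‖ = (Fintype.card ι : ℝ)) :
    ∀ x, f x = (∑ y, f y) / (Fintype.card ι : ℂ) := by
  intro x
  rcases Nat.eq_zero_or_pos (Fintype.card ι) with h0 | hpos
  · haveI := Fintype.card_eq_zero_iff.mp h0
    exact (IsEmpty.false x).elim
  set S := ∑ y, f y with hS
  have hN : (0:ℝ) < (Fintype.card ι : ℝ) := by exact_mod_cast hpos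
  have hNC : ((Fintype.card ι : ℂ)) ≠ 0 := by exact_mod_cast hpos.ne'
  have hnorm : ‖S‖ = (Fintype.card ι : ℝ) := by exact h
  set c : ℂ := (starRingEnd ℂ) S / (Fintype.card ι : ℂ) with hc
  have habs : ∀ y, ‖c * f y‖ ≤ 1 := by
    intro y
    rw [norm_mul, hc, norm_div, Complex.norm_conj, h]
    simp only [Complex.norm_natCast]
    calc (Fintype.card ι : ℝ) / (Fintype.card ι : ℝ) * ‖f y‖
        = ‖f y‖ := by rw [div_self hN.ne', one_mul]
      _ ≤ 1 := h1 y
  have hsum : (∑ y, (c * f y).re) = (Fintype.card ι : ℝ) := by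
    rw [← Complex.re_sum, ← Finset.mul_sum, ← hS, hc, div_mul_eq_mul_div,
      Complex.conj_mul', hnorm]
    rw [show (((Fintype.card ι : ℝ) : ℂ)^2 / (Fintype.card ι : ℂ)) =
      (((Fintype.card ι : ℝ)^2 / Fintype.card ι : ℝ) : ℂ) by push_cast; ring]
    rw [Complex.ofReal_re, sq, mul_div_assoc, div_self hN.ne', mul_one]
  have hterm : ∀ y, (c * f y).re = 1 := by
    intro y
    have h0 : ∀ z ∈ Finset.univ, (0:ℝ) ≤ 1 - (c * f z).re := by
      intro z _
      have := (Complex.re_le_norm (c * f z)).trans (habs z)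
      linarith
    have hzero : ∑ z : ι, (1 - (c * f z).re) = 0 := by
      rw [Finset.sum_sub_distrib, hsum]
      simp
    have := (Finset.sum_eq_zero_iff_of_nonneg h0).mp hzero y (Finset.mem_univ y)
    linarith
  have him : (c * f x).im = 0 := by
    have hns : Complex.normSq (c * f x) ≤ 1 := by
      have := habs x
      rw [← Complex.sq_norm]
      nlinarith [norm_nonneg (c * f x)]
    have : (c * f x).re^2 + (c * f x).im^2 ≤ 1 := by
      rwa [Complex.normSq_apply, ← sq, ← sq] at hns
    nlinarith [hterm x, sq_nonneg ((c*f x).im)]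
  have hcx : c * f x = 1 := Complex.ext (by rw [hterm x]; simp) (by simpa using him)
  have habsS : S * (starRingEnd ℂ) S = ((Fintype.card ι : ℂ))^2 := by
    rw [Complex.mul_conj', hnorm]; push_cast; ring
  have hthis : (starRingEnd ℂ) S * f x = (Fintype.card ι : ℂ) := by
    rw [hc, div_mul_eq_mul_div, div_eq_one_iff_eq hNC] at hcx
    linear_combination hcx
  have h2 : (Fintype.card ι : ℂ) * ((Fintype.card ι : ℂ) * f x)
      = (Fintype.card ι : ℂ) * S := by
    linear_combination S * hthis - f x * habsS
  have h3 := mul_left_cancel₀ hNC h2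
  rw [eq_div_iff hNC]
  linear_combination h3

lemma finrank_adjoin_range_hom {A : Type*} [Group A] [Finite A] (f : A →* ℂˣ) :
    Module.finrank ℚ
      (IntermediateField.adjoin ℚ (Set.range fun a => ((f a : ℂˣ) : ℂ)))
      = (Nat.card f.range).totient := by
  haveI : Finite f.range := Set.Finite.to_subtype (Set.finite_range _)
  obtain ⟨g, hg⟩ := IsCyclic.exists_generator (α := f.range)
  haveI : Fintype f.range := Fintype.ofFinite _
  have hord : orderOf g = Nat.card f.range := by
    exact orderOf_eq_card_of_forall_mem_zpowers hg
  have hordu : orderOf ((g : ℂˣ)) = Nat.card f.range := by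
    rw [← hord]
    exact orderOf_injective f.range.subtype Subtype.coe_injective g
  have hordc : orderOf (((g : ℂˣ) : ℂ)) = Nat.card f.range := by
    rw [← hordu]; exact orderOf_units
  set n := Nat.card f.range with hn
  have hnpos : 0 < n := Nat.card_pos
  set ζ : ℂ := ((g : ℂˣ) : ℂ) with hζ
  have hprim : IsPrimitiveRoot ζ n := by
    rw [← hordc]; exact IsPrimitiveRoot.orderOf ζ
  have hadj : IntermediateField.adjoin ℚ (Set.range fun a => ((f a : ℂˣ) : ℂ))
      = IntermediateField.adjoin ℚ ({ζ} : Set ℂ) := by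
    apply le_antisymm
    · rw [IntermediateField.adjoin_le_iff]
      rintro - ⟨a, rfl⟩
      obtain ⟨k, hk⟩ := hg ⟨f a, a, rfl⟩
      have hk' : ((g : ℂˣ)) ^ k = f a := by
        have := congrArg (Subtype.val) hk
        simpa using this
      have hval : ((f a : ℂˣ) : ℂ) = ζ ^ k := by
        rw [← hk', hζ]
        simp [Units.val_zpow_eq_zpow_val]
      show ((f a : ℂˣ) : ℂ) ∈ (IntermediateField.adjoin ℚ ({ζ} : Set ℂ) : IntermediateField ℚ ℂ)
      rw [hval]
      exact zpow_mem (IntermediateField.mem_adjoin_simple_self ℚ ζ) k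
    · rw [IntermediateField.adjoin_le_iff]
      rintro - rfl
      obtain ⟨a, ha⟩ := g.2
      exact IntermediateField.subset_adjoin ℚ _ ⟨a, by show ((f a : ℂˣ) : ℂ) = ζ; rw [ha]⟩
  rw [hadj]
  have hint : IsIntegral ℚ ζ := (hprim.isIntegral hnpos).tower_top
  rw [IntermediateField.adjoin.finrank hint,
    ← Polynomial.cyclotomic_eq_minpoly_rat hprim hnpos, Polynomial.natDegree_cyclotomic]

/-- If `G` is a GVZ `p`-group (`p ≥ 3`) and `χ = Ind_H^G λ` with `λ` linear on `H ≤ G` and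
`ℚ(χ) = ℚ(λ)`, then `|ker λ| = χ(1)·|ker χ|`. -/
theorem stmt13 {p : ℕ} [Fact p.Prime] (hp : 3 ≤ p) {G : Type} [Group G] [Fintype G]
    (hG : IsPGroup p G)
    (hGVZ : ∀ ψ : G → ℂ, IsIrrChar G ψ → ψ 1 ≠ 1 → ∀ g ∉ charZ ψ, ψ g = 0)
    (χ : G → ℂ) (d : ℕ) (hχ : IsIrrChar G χ) (hd : χ 1 = (d : ℂ))
    (H : Subgroup G) (lam : H →* ℂˣ)
    (hind : χ = indChar H lam) (hQ : QChar χ = QLin lam) :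
    Nat.card lam.ker = d * Nat.card (charKer χ) := by
  have cardHpos : 0 < Nat.card H := Nat.card_pos
  have cardHC : ((Nat.card H : ℂ)) ≠ 0 := by exact_mod_cast cardHpos.ne'
  -- all values of lam have modulus 1
  have habs1 : ∀ h : H, ‖((lam h : ℂˣ) : ℂ)‖ = 1 := by
    intro h
    have hpow : (((lam h : ℂˣ) : ℂ)) ^ (Nat.card H) = 1 := by
      rw [← Units.val_pow_eq_pow_val, ← map_pow, pow_card_eq_one', map_one, Units.val_one]
    have := Complex.norm_eq_one_of_pow_eq_one hpow cardHpos.ne'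
    exact this
  -- χ 1 = |G| / |H|
  have hchi1 : χ 1 = (Fintype.card G : ℂ) / (Nat.card H : ℂ) := by
    rw [hind]
    show (Nat.card H : ℂ)⁻¹ * _ = _
    rw [div_eq_inv_mul]
    congr 1
    rw [Finset.sum_congr rfl (fun x _ => ?_), Finset.sum_const, Finset.card_univ,
      nsmul_eq_mul, mul_one]
    have hx : x * (1:G) * x⁻¹ = 1 := by group
    rw [dif_pos (by rw [hx]; exact H.one_mem)]
    have : (⟨x * (1:G) * x⁻¹, by rw [hx]; exact H.one_mem⟩ : H) = 1 := by
      ext; simpa using hx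
    rw [this, map_one, Units.val_one]
  -- d * |H| = |G|
  have hdH : d * Nat.card H = Fintype.card G := by
    have : (d : ℂ) * (Nat.card H : ℂ) = (Fintype.card G : ℂ) := by
      rw [← hd, hchi1, div_mul_cancel₀ _ cardHC]
    exact_mod_cast this
  have hdpos : 0 < d := by
    rcases Nat.eq_zero_or_pos d with rfl | h
    · simp at hdH
      exact absurd hdH.symm (Fintype.card_ne_zero)
    · exact h
  have hdC : ((d : ℂ)) ≠ 0 := by exact_mod_cast hdpos.ne'
  have hχeq : ∀ g, χ g = (Nat.card H : ℂ)⁻¹ *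
      ∑ x : G, (if h : x * g * x⁻¹ ∈ H then ((lam ⟨x * g * x⁻¹, h⟩ : ℂˣ) : ℂ) else 0) :=
    fun g => by rw [hind]; rfl
  have hNR : ((d : ℝ)) * (Nat.card H : ℝ) = (Fintype.card G : ℝ) := by exact_mod_cast hdH
  have hNC : ((d : ℂ)) * (Nat.card H : ℂ) = (Fintype.card G : ℂ) := by exact_mod_cast hdH
  -- value of χ on elements satisfying Q
  have hQval : ∀ g (u : ℂˣ), (∀ x : G, ∃ h : x * g * x⁻¹ ∈ H, lam ⟨x * g * x⁻¹, h⟩ = u) →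
      χ g = (d : ℂ) * u := by
    intro g u hu
    have hsum : (∑ x : G, if h : x * g * x⁻¹ ∈ H then ((lam ⟨x * g * x⁻¹, h⟩ : ℂˣ) : ℂ) else 0)
        = (Fintype.card G : ℂ) * u := by
      rw [Finset.sum_congr rfl (fun x _ => ?_), Finset.sum_const, Finset.card_univ, nsmul_eq_mul]
      obtain ⟨h, hh⟩ := hu x
      rw [dif_pos h, hh]
    rw [hχeq g, hsum, ← hNC, mul_comm ((d:ℂ)), mul_assoc, ← mul_assoc,
      inv_mul_cancel₀ cardHC, one_mul]
  -- each summand has modulus at most 1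
  have habsTerm : ∀ (g x : G), ‖(if h : x * g * x⁻¹ ∈ H then ((lam ⟨x * g * x⁻¹, h⟩ : ℂˣ) : ℂ) else 0)‖ ≤ 1 := by
    intro g x
    split
    · exact le_of_eq (habs1 _)
    · simp
  -- |χ g| ≤ d
  have habsle : ∀ g, ‖χ g‖ ≤ (d : ℝ) := by
    intro g
    rw [hχeq g, norm_mul, norm_inv, Complex.norm_natCast]
    have hb : ‖(∑ x : G,
        (if h : x * g * x⁻¹ ∈ H then ((lam ⟨x * g * x⁻¹, h⟩ : ℂˣ) : ℂ) else 0))‖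
        ≤ (Fintype.card G : ℝ) := by
      refine (norm_sum_le _ _).trans ?_
      calc ∑ x : G, ‖(if h : x * g * x⁻¹ ∈ H then ((lam ⟨x * g * x⁻¹, h⟩ : ℂˣ) : ℂ) else 0)‖
          ≤ ∑ _x : G, (1:ℝ) := Finset.sum_le_sum (fun x _ => habsTerm g x)
        _ = (Fintype.card G : ℝ) := by simp
    calc (Nat.card ↥H : ℝ)⁻¹ * ‖_‖
        ≤ (Nat.card ↥H : ℝ)⁻¹ * (Fintype.card G : ℝ) :=
          mul_le_mul_of_nonneg_left hb (by positivity)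
      _ = (d : ℝ) := by
          rw [← hNR]
          field_simp
  -- characterization of charZ χ
  have habsχ1 : ‖χ 1‖ = (d : ℝ) := by rw [hd, Complex.norm_natCast]
  have hZiff : ∀ g : G, g ∈ charZ χ ↔ (∃ u : ℂˣ, ∀ x : G, ∃ h : x * g * x⁻¹ ∈ H,
      lam ⟨x * g * x⁻¹, h⟩ = u) := by
    intro g
    constructor
    · intro hg
      have hgabs : ‖χ g‖ = (d : ℝ) := by
        rw [show ‖χ g‖ = ‖χ 1‖ from hg, habsχ1]
      have hSval : (∑ x : G, if h : x * g * x⁻¹ ∈ H then ((lam ⟨x * g * x⁻¹, h⟩ : ℂˣ) : ℂ) else 0)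
          = (Nat.card H : ℂ) * χ g := by
        rw [hχeq g, ← mul_assoc, mul_inv_cancel₀ cardHC, one_mul]
      have hSabs : ‖(∑ x : G,
          if h : x * g * x⁻¹ ∈ H then ((lam ⟨x * g * x⁻¹, h⟩ : ℂˣ) : ℂ) else 0)‖
          = (Fintype.card G : ℝ) := by
        rw [hSval, norm_mul, Complex.norm_natCast, hgabs, ← hNR]
        ring
      have heach := sum_abs_eq_card _ (habsTerm g) hSabs
      -- common value is χ g / d
      have hcommon : ((∑ x : G,
          if h : x * g * x⁻¹ ∈ H then ((lam ⟨x * g * x⁻¹, h⟩ : ℂˣ) : ℂ) else 0)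
          / (Fintype.card G : ℂ)) = χ g / (d : ℂ) := by
        rw [hSval, ← hNC]
        have hHC2 : ((Fintype.card G : ℂ)) ≠ 0 := by
          rw [← hNC]; exact mul_ne_zero hdC cardHC
        field_simp
      have hvne : χ g / (d : ℂ) ≠ 0 := by
        intro h0
        have : ‖χ g / (d : ℂ)‖ = 0 := by rw [h0, norm_zero]
        rw [norm_div, hgabs, Complex.norm_natCast, div_self (by exact_mod_cast hdpos.ne')] at this
        norm_num at this
      have hterm : ∀ x : G, (if h : x * g * x⁻¹ ∈ H
          then ((lam ⟨x * g * x⁻¹, h⟩ : ℂˣ) : ℂ) else 0) = χ g / (d : ℂ) := by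
        intro x
        rw [heach x, hcommon]
      have h1g : (1:G) * g * 1⁻¹ ∈ H := by
        by_contra hmem
        have := hterm 1
        rw [dif_neg hmem] at this
        exact hvne this.symm
      have hgH : g ∈ H := by
        have : (1:G) * g * 1⁻¹ = g := by group
        rwa [this] at h1g
      refine ⟨lam ⟨g, hgH⟩, fun x => ?_⟩
      have hx : x * g * x⁻¹ ∈ H := by
        by_contra hmem
        have := hterm x
        rw [dif_neg hmem] at this
        exact hvne this.symm
      refine ⟨hx, Units.ext ?_⟩
      have h1 : ((lam ⟨(1:G) * g * 1⁻¹, h1g⟩ : ℂˣ) : ℂ) = χ g / (d : ℂ) := by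
        have := hterm 1
        rwa [dif_pos h1g] at this
      have h2 : ((lam ⟨x * g * x⁻¹, hx⟩ : ℂˣ) : ℂ) = χ g / (d : ℂ) := by
        have := hterm x
        rwa [dif_pos hx] at this
      have h3 : (⟨(1:G) * g * 1⁻¹, h1g⟩ : H) = ⟨g, hgH⟩ := Subtype.ext (by group)
      rw [h2, ← h1, h3]
    · rintro ⟨u, hu⟩
      have habsu : ‖((u : ℂˣ) : ℂ)‖ = 1 := by
        obtain ⟨h1, hh1⟩ := hu 1
        rw [← hh1]; exact habs1 _
      show ‖χ g‖ = ‖χ 1‖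
      rw [hQval g u hu, norm_mul, habsu, Complex.norm_natCast, mul_one, habsχ1]
  -- Z(χ) as a subgroup
  set Z : Subgroup G := {
    carrier := charZ χ
    one_mem' := rfl
    mul_mem' := by
      intro a b ha hb
      rw [hZiff] at ha hb ⊢
      obtain ⟨u, hu⟩ := ha
      obtain ⟨v, hv⟩ := hb
      refine ⟨u * v, fun x => ?_⟩
      obtain ⟨ha1, ha2⟩ := hu x
      obtain ⟨hb1, hb2⟩ := hv x
      have hxy : x * (a * b) * x⁻¹ = (x * a * x⁻¹) * (x * b * x⁻¹) := by group
      refine ⟨by rw [hxy]; exact mul_mem ha1 hb1, ?_⟩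
      have : (⟨x * (a * b) * x⁻¹, by rw [hxy]; exact mul_mem ha1 hb1⟩ : H)
          = ⟨x * a * x⁻¹, ha1⟩ * ⟨x * b * x⁻¹, hb1⟩ := Subtype.ext hxy
      rw [this, map_mul, ha2, hb2]
    inv_mem' := by
      intro a ha
      rw [hZiff] at ha ⊢
      obtain ⟨u, hu⟩ := ha
      refine ⟨u⁻¹, fun x => ?_⟩
      obtain ⟨ha1, ha2⟩ := hu x
      have hxy : x * a⁻¹ * x⁻¹ = (x * a * x⁻¹)⁻¹ := by group
      refine ⟨by rw [hxy]; exact inv_mem ha1, ?_⟩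
      have : (⟨x * a⁻¹ * x⁻¹, by rw [hxy]; exact inv_mem ha1⟩ : H)
          = (⟨x * a * x⁻¹, ha1⟩ : H)⁻¹ := Subtype.ext hxy
      rw [this, map_inv, ha2] } with hZdef
  have hmemZ : ∀ g : G, g ∈ Z ↔ g ∈ charZ χ := fun g => Iff.rfl
  have hZle : Z ≤ H := by
    intro g hg
    rw [hmemZ, hZiff] at hg
    obtain ⟨u, hu⟩ := hg
    obtain ⟨h1, _⟩ := hu 1
    have : (1:G) * g * 1⁻¹ = g := by group
    rwa [this] at h1
  set μ : ↥Z →* ℂˣ := lam.comp (Subgroup.inclusion hZle) with hμdef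
  -- χ on Z is d·μ
  have hμval : ∀ z : ↥Z, χ (z : G) = (d : ℂ) * μ z := by
    intro z
    have hz := z.2
    rw [hmemZ, hZiff] at hz
    obtain ⟨u, hu⟩ := hz
    rw [hQval _ u hu]
    have huμ : u = μ z := by
      obtain ⟨h1, hh1⟩ := hu 1
      rw [← hh1]
      show lam ⟨1 * (z:G) * 1⁻¹, h1⟩ = lam (Subgroup.inclusion hZle z)
      congr 1
      exact Subtype.ext (show (1:G) * (z:G) * 1⁻¹ = ((z:G)) by group)
    rw [huμ]
  -- kernel of χ as image of ker μ
  have hkerset : charKer χ = (Subtype.val '' ((μ.ker : Subgroup ↥Z) : Set ↥Z)) := by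
    ext g
    constructor
    · intro hg
      have hgval : χ g = (d : ℂ) := by rw [show χ g = χ 1 from hg, hd]
      have hgZ : g ∈ Z := by
        rw [hmemZ]
        show ‖χ g‖ = ‖χ 1‖
        rw [hgval, habsχ1, Complex.norm_natCast]
      have hμ1 : μ ⟨g, hgZ⟩ = 1 := by
        have := hμval ⟨g, hgZ⟩
        rw [hgval] at this
        have h2 : ((μ ⟨g, hgZ⟩ : ℂˣ) : ℂ) = 1 := by
          have := mul_left_cancel₀ hdC (by rw [← this, mul_one] : (d:ℂ) * (μ ⟨g, hgZ⟩ : ℂ) = (d:ℂ) * 1)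
          exact this
        exact Units.ext h2
      exact ⟨⟨g, hgZ⟩, hμ1, rfl⟩
    · rintro ⟨z, hz, rfl⟩
      show χ (z : G) = χ 1
      rw [hμval z, show μ z = 1 from hz, hd]
      simp
  have hkercard : Nat.card (charKer χ) = Nat.card μ.ker := by
    rw [hkerset, Nat.card_image_of_injective Subtype.val_injective]
    rfl
  -- orthogonality: ∑ χ(g) χ(g⁻¹) = |G|
  obtain ⟨V, hsimple, hVchar⟩ := hχ
  haveI := hsimple
  letI hft : Fintype G := ‹Fintype G›
  letI : Invertible ((Nat.card G : ℂ)) :=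
    invertibleOfNonzero (by exact_mod_cast (Nat.card_pos (α := G)).ne')
  have horth : ∑ g : G, χ g * χ g⁻¹ = (Fintype.card G : ℂ) := by
    have h := FDRep.char_orthonormal (k := ℂ) (G := G) V V
    rw [if_pos ⟨CategoryTheory.Iso.refl V⟩] at h
    have h2 : (Nat.card G : ℂ) * ((Nat.card G : ℂ)⁻¹ *
        ∑ g : G, V.character g * V.character g⁻¹)
        = (Nat.card G : ℂ) * 1 := by rw [h]
    rw [← mul_assoc, mul_inv_cancel₀ (by exact_mod_cast (Nat.card_pos (α := G)).ne'), one_mul,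
      mul_one, Nat.card_eq_fintype_card] at h2
    rw [hVchar]
    exact h2
  -- if d = 1 then Z = everything
  have hZtop : d = 1 → ∀ g : G, g ∈ Z := by
    intro hd1 g
    have h1 : ∀ x : G, ‖χ x * χ x⁻¹‖ ≤ 1 := by
      intro x
      rw [norm_mul]
      have h2 := habsle x
      have h3 := habsle x⁻¹
      rw [hd1] at h2 h3
      push_cast at h2 h3
      nlinarith [norm_nonneg (χ x), norm_nonneg (χ x⁻¹)]
    have heach := sum_abs_eq_card (fun x => χ x * χ x⁻¹) h1
      (by rw [horth, Complex.norm_natCast])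
    have hgg := heach g
    rw [horth, div_self (by exact_mod_cast (Fintype.card_ne_zero (α := G)))] at hgg
    have habs_gg : ‖χ g‖ * ‖χ g⁻¹‖ = 1 := by
      rw [← norm_mul, hgg, norm_one]
    have h2 := habsle g
    have h3 := habsle g⁻¹
    rw [hd1] at h2 h3
    push_cast at h2 h3
    rw [hmemZ]
    show ‖χ g‖ = ‖χ 1‖
    rw [habsχ1, hd1]
    push_cast
    nlinarith [norm_nonneg (χ g), norm_nonneg (χ g⁻¹)]
  -- χ vanishes off Z
  have hvanish : ∀ g : G, g ∉ Z → χ g = 0 := by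
    intro g hg
    rcases eq_or_ne d 1 with hd1 | hd1
    · exact absurd (hZtop hd1 g) hg
    · refine hGVZ χ ⟨V, hsimple, hVchar⟩ ?_ g (by rwa [← hmemZ])
      rw [hd]
      exact_mod_cast hd1
  -- |Z|·d² = |G|
  have hcardZ : Nat.card ↥Z * d ^ 2 = Fintype.card G := by
    have hsum : ∑ g : G, χ g * χ g⁻¹ = ∑ g : G, (if g ∈ Z then ((d:ℂ))^2 else 0) := by
      refine Finset.sum_congr rfl (fun g _ => ?_)
      by_cases hg : g ∈ Z
      · rw [if_pos hg]
        have hginv : g⁻¹ ∈ Z := inv_mem hg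
        have e1 := hμval ⟨g, hg⟩
        have e2 := hμval ⟨g⁻¹, hginv⟩
        have e3 : (⟨g⁻¹, hginv⟩ : ↥Z) = (⟨g, hg⟩ : ↥Z)⁻¹ := rfl
        rw [e3, map_inv] at e2
        have e2' : χ g⁻¹ = (d:ℂ) * (((μ ⟨g, hg⟩)⁻¹ : ℂˣ) : ℂ) := e2
        show χ g * χ g⁻¹ = _
        rw [e1, e2']
        have : ((μ ⟨g, hg⟩ : ℂˣ) : ℂ) * (((μ ⟨g, hg⟩)⁻¹ : ℂˣ) : ℂ) = 1 := by
          rw [← Units.val_mul, mul_inv_cancel, Units.val_one]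
        calc ((d:ℂ) * ((μ ⟨g, hg⟩ : ℂˣ) : ℂ)) * ((d:ℂ) * (((μ ⟨g, hg⟩)⁻¹ : ℂˣ) : ℂ))
            = (d:ℂ)^2 * (((μ ⟨g, hg⟩ : ℂˣ) : ℂ) * (((μ ⟨g, hg⟩)⁻¹ : ℂˣ) : ℂ)) := by ring
          _ = (d:ℂ)^2 := by rw [this, mul_one]
      · rw [if_neg hg, hvanish g hg, zero_mul]
    rw [hsum] at horth
    have hfilter : (Finset.univ.filter (fun g : G => g ∈ Z)).card = Nat.card ↥Z := by
      rw [Nat.card_eq_fintype_card, Fintype.card_subtype]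
    rw [← Finset.sum_filter, Finset.sum_const, hfilter, nsmul_eq_mul] at horth
    exact_mod_cast horth
  -- ℚ(χ) is generated by the values of μ
  have hQchar : QChar χ = IntermediateField.adjoin ℚ (Set.range fun z : ↥Z => ((μ z : ℂˣ) : ℂ)) := by
    apply le_antisymm
    · rw [QChar, IntermediateField.adjoin_le_iff]
      rintro - ⟨g, rfl⟩
      by_cases hg : g ∈ Z
      · rw [hμval ⟨g, hg⟩]
        exact mul_mem (IntermediateField.natCast_mem _ d)
          (IntermediateField.subset_adjoin ℚ _ ⟨⟨g, hg⟩, rfl⟩)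
      · rw [hvanish g hg]
        exact zero_mem _
    · rw [IntermediateField.adjoin_le_iff]
      rintro - ⟨z, rfl⟩
      have : ((μ z : ℂˣ) : ℂ) = χ (z : G) * ((d : ℂ))⁻¹ := by
        rw [hμval z]
        field_simp
      show ((μ z : ℂˣ) : ℂ) ∈ (QChar χ : IntermediateField ℚ ℂ)
      rw [this]
      exact mul_mem (IntermediateField.subset_adjoin ℚ _ ⟨(z : G), rfl⟩)
        (inv_mem (IntermediateField.natCast_mem _ d))
  -- totient equality from the field equality
  have hfr1 : Module.finrank ℚ (QChar χ) = (Nat.card μ.range).totient := by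
    rw [hQchar]
    exact finrank_adjoin_range_hom μ
  have hfr2 : Module.finrank ℚ (QLin lam) = (Nat.card lam.range).totient :=
    finrank_adjoin_range_hom lam
  have htot : (Nat.card μ.range).totient = (Nat.card lam.range).totient := by
    rw [← hfr1, ← hfr2, hQ]
  -- both cardinalities are powers of p
  obtain ⟨k, hk⟩ := IsPGroup.iff_card.mp hG
  have hkfin : Nat.card G = Fintype.card G := Nat.card_eq_fintype_card
  have hcardH_eq : Nat.card ↥H = Nat.card lam.range * Nat.card lam.ker := by
    rw [Subgroup.card_eq_card_quotient_mul_card_subgroup lam.ker,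
      Nat.card_congr (QuotientGroup.quotientKerEquivRange lam).toEquiv]
  have hcardZ_eq : Nat.card ↥Z = Nat.card μ.range * Nat.card μ.ker := by
    rw [Subgroup.card_eq_card_quotient_mul_card_subgroup μ.ker,
      Nat.card_congr (QuotientGroup.quotientKerEquivRange μ).toEquiv]
  have hn_dvd : Nat.card lam.range ∣ p ^ k := by
    rw [← hk]
    exact dvd_trans (Dvd.intro _ hcardH_eq.symm) (Subgroup.card_subgroup_dvd_card H)
  have hm_dvd : Nat.card μ.range ∣ p ^ k := by
    rw [← hk]
    exact dvd_trans (Dvd.intro _ hcardZ_eq.symm) (Subgroup.card_subgroup_dvd_card Z)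
  obtain ⟨a, _, han⟩ := (Nat.dvd_prime_pow (Fact.out : p.Prime)).mp hn_dvd
  obtain ⟨b, _, hbm⟩ := (Nat.dvd_prime_pow (Fact.out : p.Prime)).mp hm_dvd
  have hnm : Nat.card μ.range = Nat.card lam.range := by
    rw [han, hbm] at htot
    rw [han, hbm, totient_prime_pow_inj (Fact.out : p.Prime) hp htot.symm]
  -- final arithmetic
  have hrangepos : 0 < Nat.card lam.range := Nat.card_pos
  have key : d * (Nat.card lam.range * Nat.card lam.ker)
      = Nat.card lam.range * (Nat.card μ.ker * d * d) := by
    calc d * (Nat.card lam.range * Nat.card lam.ker)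
        = d * Nat.card ↥H := by rw [hcardH_eq]
      _ = Fintype.card G := hdH
      _ = Nat.card ↥Z * d ^ 2 := hcardZ.symm
      _ = Nat.card μ.range * Nat.card μ.ker * d ^ 2 := by rw [hcardZ_eq]
      _ = Nat.card lam.range * (Nat.card μ.ker * d * d) := by rw [hnm]; ring
  have key2 : Nat.card lam.range * (d * Nat.card lam.ker)
      = Nat.card lam.range * (d * (Nat.card μ.ker * d)) := by
    calc Nat.card lam.range * (d * Nat.card lam.ker)
        = d * (Nat.card lam.range * Nat.card lam.ker) := by ring
      _ = Nat.card lam.range * (Nat.card μ.ker * d * d) := key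
      _ = Nat.card lam.range * (d * (Nat.card μ.ker * d)) := by ring
  have key3 := Nat.eq_of_mul_eq_mul_left hrangepos key2
  have key4 := Nat.eq_of_mul_eq_mul_left hdpos key3
  rw [key4, hkercard]
  ring
end
end
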